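/- Let ω₊⁰ ≥ ω₋⁰ > 0 and b⁰ ∈ ℝ with ω₊⁰ω₋⁰ > 4(b⁰)². Set δ := ω₊⁰ − ω₋⁰, σ := ω₊⁰ + ω₋⁰, and τ := √(σ² − 16(b⁰)²) > 0. Define h_t(x) := ((τ+x)(τ+σ) + (τ−x)(σ−τ) e^{−4τt}) / (2(τ+σ+(τ−σ)e^{−4τt})). Then ω₋(t) := h_t(−δ), ω₊(t) := h_t(δ), and b(t)² := 4τ²(b⁰)² e^{−4τt}/(σ+τ+(τ−σ)e^{−4τt})² solve ∂ₜω₋ = −16b², ∂ₜω₊ = −16b², ∂ₜb = −2(ω₋+ω₊)b on [0,∞) with the given initial data, and as t → ∞, ω±(t) → (τ±δ)/2 and b(t) → 0 exponentially fast. -/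

import Mathlib

open Filter

/-- `τ := √(σ² − 16(b⁰)²)` with `σ := ω₊⁰ + ω₋⁰`. -/
noncomputable def tau5 (w m b0 : ℝ) : ℝ := Real.sqrt ((w + m) ^ 2 - 16 * b0 ^ 2)

/-- `h_t(x) := ((τ+x)(τ+σ) + (τ−x)(σ−τ)e^{−4τt}) / (2(τ+σ+(τ−σ)e^{−4τt}))`. -/
noncomputable def h5 (w m b0 : ℝ) (x t : ℝ) : ℝ :=
  ((tau5 w m b0 + x) * (tau5 w m b0 + (w + m)) +
      (tau5 w m b0 - x) * ((w + m) - tau5 w m b0) * Real.exp (-(4 * tau5 w m b0 * t))) /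
    (2 * (tau5 w m b0 + (w + m) + (tau5 w m b0 - (w + m)) * Real.exp (-(4 * tau5 w m b0 * t))))

/-- `ω₋(t) := h_t(−δ)` with `δ := ω₊⁰ − ω₋⁰`. -/
noncomputable def w5m (w m b0 : ℝ) (t : ℝ) : ℝ := h5 w m b0 (-(w - m)) t

/-- `ω₊(t) := h_t(δ)`. -/
noncomputable def w5p (w m b0 : ℝ) (t : ℝ) : ℝ := h5 w m b0 (w - m) t

/-- `b(t)` with `b(t)² = 4τ²(b⁰)²e^{−4τt}/(σ+τ+(τ−σ)e^{−4τt})²`. -/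
noncomputable def b5 (w m b0 : ℝ) (t : ℝ) : ℝ :=
  2 * tau5 w m b0 * b0 * Real.exp (-(2 * tau5 w m b0 * t)) /
    ((w + m) + tau5 w m b0 + (tau5 w m b0 - (w + m)) * Real.exp (-(4 * tau5 w m b0 * t)))

section stmt5aux

variable {w m b0 : ℝ}

lemma tau5_sq' (hm : 0 < m) (hwm : m ≤ w) (hcond : 4 * b0 ^ 2 < w * m) :
    tau5 w m b0 ^ 2 = (w + m) ^ 2 - 16 * b0 ^ 2 := by
  rw [tau5, Real.sq_sqrt]; nlinarith [sq_nonneg (w - m)]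

lemma tau5_pos' (hm : 0 < m) (hwm : m ≤ w) (hcond : 4 * b0 ^ 2 < w * m) :
    0 < tau5 w m b0 :=
  Real.sqrt_pos.2 (by nlinarith [sq_nonneg (w - m)])

lemma tau5_le' (hm : 0 < m) (hwm : m ≤ w) (hcond : 4 * b0 ^ 2 < w * m) :
    tau5 w m b0 ≤ w + m := by
  have h := Real.sqrt_le_sqrt
    (show (w + m) ^ 2 - 16 * b0 ^ 2 ≤ (w + m) ^ 2 by nlinarith [sq_nonneg b0])
  rwa [Real.sqrt_sq (by linarith : (0:ℝ) ≤ w + m)] at h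

lemma tau5_ge' (hm : 0 < m) (hwm : m ≤ w) (hcond : 4 * b0 ^ 2 < w * m) :
    w - m ≤ tau5 w m b0 := by
  have h := Real.sqrt_le_sqrt (show (w - m) ^ 2 ≤ (w + m) ^ 2 - 16 * b0 ^ 2 by nlinarith)
  rwa [Real.sqrt_sq (by linarith : (0:ℝ) ≤ w - m)] at h

/-- Derivative of `h5` (any `x`), valid where the denominator is positive. -/
lemma h5_deriv' (x t : ℝ) (hτsq : tau5 w m b0 ^ 2 = (w + m) ^ 2 - 16 * b0 ^ 2)
    (hg : 0 < tau5 w m b0 + (w + m) +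
        (tau5 w m b0 - (w + m)) * Real.exp (-(4 * tau5 w m b0 * t))) :
    HasDerivAt (fun s => h5 w m b0 x s) (-16 * (b5 w m b0 t) ^ 2) t := by
  set τ := tau5 w m b0 with hτdef
  have hEd : HasDerivAt (fun s : ℝ => Real.exp (-(4 * τ * s)))
      (-(4 * τ) * Real.exp (-(4 * τ * t))) t := by
    have h1 : HasDerivAt (fun s : ℝ => -(4 * τ * s)) (-(4 * τ)) t := by
      have h0 := ((hasDerivAt_id t).const_mul (4 * τ)).neg
      simp only [mul_one] at h0
      exact h0
    convert h1.exp using 1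
    ring
  set E := Real.exp (-(4 * τ * t)) with hEdef
  have hE2sq : Real.exp (-(2 * τ * t)) ^ 2 = E := by
    rw [sq, ← Real.exp_add, hEdef]; congr 1; ring
  have hN : HasDerivAt (fun s : ℝ => (τ + x) * (τ + (w + m)) +
      (τ - x) * ((w + m) - τ) * Real.exp (-(4 * τ * s)))
      ((τ - x) * ((w + m) - τ) * (-(4 * τ) * E)) t := by
    simpa using (hEd.const_mul ((τ - x) * ((w + m) - τ))).const_add ((τ + x) * (τ + (w + m)))
  have hD : HasDerivAt (fun s : ℝ => 2 * (τ + (w + m) + (τ - (w + m)) * Real.exp (-(4 * τ * s))))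
      (2 * ((τ - (w + m)) * (-(4 * τ) * E))) t :=
    (((hEd.const_mul (τ - (w + m))).const_add (τ + (w + m))).const_mul 2)
  have hD0 : 2 * (τ + (w + m) + (τ - (w + m)) * E) ≠ 0 := by positivity
  have H := hN.div hD hD0
  apply HasDerivAt.congr_deriv H
  symm
  have hg' : (0:ℝ) < w + m + τ + (τ - (w + m)) * E := by linarith
  rw [b5, ← hτdef, ← hEdef, div_pow, mul_pow, hE2sq]
  rw [← mul_div_assoc, div_eq_div_iff (by positivity) (by positivity)]
  linear_combination (-16 * τ^2 * E * (τ + (w + m) + (τ - (w + m)) * E)^2) * hτsq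

/-- Derivative of `b5`, valid where the denominator is positive. -/
lemma b5_deriv' (t : ℝ)
    (hg : 0 < tau5 w m b0 + (w + m) +
        (tau5 w m b0 - (w + m)) * Real.exp (-(4 * tau5 w m b0 * t))) :
    HasDerivAt (b5 w m b0) (-2 * (w5m w m b0 t + w5p w m b0 t) * b5 w m b0 t) t := by
  set τ := tau5 w m b0 with hτdef
  have hE2d : HasDerivAt (fun s : ℝ => Real.exp (-(2 * τ * s)))
      (-(2 * τ) * Real.exp (-(2 * τ * t))) t := by
    have h1 : HasDerivAt (fun s : ℝ => -(2 * τ * s)) (-(2 * τ)) t := by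
      have h0 := ((hasDerivAt_id t).const_mul (2 * τ)).neg
      simp only [mul_one] at h0
      exact h0
    convert h1.exp using 1
    ring
  have hEd : HasDerivAt (fun s : ℝ => Real.exp (-(4 * τ * s)))
      (-(4 * τ) * Real.exp (-(4 * τ * t))) t := by
    have h1 : HasDerivAt (fun s : ℝ => -(4 * τ * s)) (-(4 * τ)) t := by
      have h0 := ((hasDerivAt_id t).const_mul (4 * τ)).neg
      simp only [mul_one] at h0
      exact h0
    convert h1.exp using 1
    ring
  have hE2sq : Real.exp (-(4 * τ * t)) = Real.exp (-(2 * τ * t)) ^ 2 := by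
    rw [sq, ← Real.exp_add]; congr 1; ring
  have hN : HasDerivAt (fun s : ℝ => 2 * τ * b0 * Real.exp (-(2 * τ * s)))
      (2 * τ * b0 * (-(2 * τ) * Real.exp (-(2 * τ * t)))) t :=
    hE2d.const_mul (2 * τ * b0)
  have hD : HasDerivAt (fun s : ℝ => (w + m) + τ +
      (τ - (w + m)) * Real.exp (-(4 * τ * s)))
      ((τ - (w + m)) * (-(4 * τ) * Real.exp (-(4 * τ * t)))) t :=
    (hEd.const_mul (τ - (w + m))).const_add ((w + m) + τ)
  have hg' : (0:ℝ) < w + m + τ + (τ - (w + m)) * Real.exp (-(4 * τ * t)) := by linarith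
  have H := hN.div hD hg'.ne'
  have hfun : ((fun s : ℝ => 2 * τ * b0 * Real.exp (-(2 * τ * s))) /
      (fun s : ℝ => (w + m) + τ + (τ - (w + m)) * Real.exp (-(4 * τ * s)))) = b5 w m b0 := rfl
  rw [hfun] at H
  apply HasDerivAt.congr_deriv H
  symm
  rw [w5m, w5p, h5, h5, b5, ← hτdef]
  rw [hE2sq]
  set e := Real.exp (-(2 * τ * t)) with hedef
  have he : (0:ℝ) < e := Real.exp_pos _
  have hg2 : (0:ℝ) < τ + (w + m) + (τ - (w + m)) * e ^ 2 := by
    rw [← hE2sq] at *; linarith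
  have hg2' : (0:ℝ) < w + m + τ + (τ - (w + m)) * e ^ 2 := by linarith
  field_simp
  ring
end stmt5aux

/-- Example of the flow when `ω₊⁰ω₋⁰ > 4(b⁰)²`: the explicit functions `w5m`, `w5p`, `b5`
solve the flow equations on `[0,∞)` with initial data `(ω₋⁰, ω₊⁰, b⁰)`, and as `t → ∞`,
`ω±(t) → (τ±δ)/2` and `b(t) → 0` exponentially fast. -/
theorem stmt_5 (w m b0 : ℝ) (hm : 0 < m) (hwm : m ≤ w) (hcond : 4 * b0 ^ 2 < w * m) :
    0 < tau5 w m b0 ∧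
    w5m w m b0 0 = m ∧ w5p w m b0 0 = w ∧ b5 w m b0 0 = b0 ∧
    (∀ t ∈ Set.Ici (0 : ℝ),
      (b5 w m b0 t) ^ 2 =
          4 * (tau5 w m b0) ^ 2 * b0 ^ 2 * Real.exp (-(4 * tau5 w m b0 * t)) /
            ((w + m) + tau5 w m b0 +
                (tau5 w m b0 - (w + m)) * Real.exp (-(4 * tau5 w m b0 * t))) ^ 2 ∧
        HasDerivAt (w5m w m b0) (-16 * (b5 w m b0 t) ^ 2) t ∧
        HasDerivAt (w5p w m b0) (-16 * (b5 w m b0 t) ^ 2) t ∧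
        HasDerivAt (b5 w m b0) (-2 * (w5m w m b0 t + w5p w m b0 t) * b5 w m b0 t) t) ∧
    Tendsto (w5m w m b0) atTop (nhds ((tau5 w m b0 - (w - m)) / 2)) ∧
    Tendsto (w5p w m b0) atTop (nhds ((tau5 w m b0 + (w - m)) / 2)) ∧
    Tendsto (b5 w m b0) atTop (nhds 0) ∧
    ∃ C : ℝ, ∀ t ∈ Set.Ici (0 : ℝ),
      |w5m w m b0 t - (tau5 w m b0 - (w - m)) / 2| ≤ C * Real.exp (-(4 * tau5 w m b0 * t)) ∧
      |w5p w m b0 t - (tau5 w m b0 + (w - m)) / 2| ≤ C * Real.exp (-(4 * tau5 w m b0 * t)) ∧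
      |b5 w m b0 t| ≤ C * Real.exp (-(2 * tau5 w m b0 * t)) := by
  set τ := tau5 w m b0 with hτdef
  have hτsq : τ ^ 2 = (w + m) ^ 2 - 16 * b0 ^ 2 := tau5_sq' hm hwm hcond
  have hτpos : 0 < τ := tau5_pos' hm hwm hcond
  have hτle : τ ≤ w + m := tau5_le' hm hwm hcond
  have hτge : w - m ≤ τ := tau5_ge' hm hwm hcond
  have hgge : ∀ t : ℝ, 0 ≤ t → 2 * τ ≤ τ + (w + m) + (τ - (w + m)) * Real.exp (-(4 * τ * t)) := by
    intro t ht
    have he1 : Real.exp (-(4 * τ * t)) ≤ 1 := Real.exp_le_one_iff.2 (by nlinarith)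
    have he0 : 0 < Real.exp (-(4 * τ * t)) := Real.exp_pos _
    nlinarith
  have hgpos : ∀ t : ℝ, 0 ≤ t → 0 < τ + (w + m) + (τ - (w + m)) * Real.exp (-(4 * τ * t)) := by
    intro t ht; have := hgge t ht; linarith
  have hE2sq : ∀ t : ℝ, Real.exp (-(2 * τ * t)) ^ 2 = Real.exp (-(4 * τ * t)) := by
    intro t; rw [sq, ← Real.exp_add]; congr 1; ring
  -- b² formula (holds for all t)
  have hb2 : ∀ t : ℝ, (b5 w m b0 t) ^ 2 =
      4 * τ ^ 2 * b0 ^ 2 * Real.exp (-(4 * τ * t)) /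
        ((w + m) + τ + (τ - (w + m)) * Real.exp (-(4 * τ * t))) ^ 2 := by
    intro t
    rw [b5, div_pow, ← hτdef, ← hE2sq t]
    ring
  -- E → 0 at infinity
  have hE0 : Tendsto (fun t : ℝ => Real.exp (-(4 * τ * t))) atTop (nhds 0) := by
    have h1 : Tendsto (fun t : ℝ => 4 * τ * t) atTop atTop :=
      Tendsto.const_mul_atTop (by positivity) tendsto_id
    exact Real.tendsto_exp_neg_atTop_nhds_zero.comp h1
  have hE20 : Tendsto (fun t : ℝ => Real.exp (-(2 * τ * t))) atTop (nhds 0) := by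
    have h1 : Tendsto (fun t : ℝ => 2 * τ * t) atTop atTop :=
      Tendsto.const_mul_atTop (by positivity) tendsto_id
    exact Real.tendsto_exp_neg_atTop_nhds_zero.comp h1
  refine ⟨hτpos, ?_, ?_, ?_, ?_, ?_, ?_, ?_, ?_⟩
  · rw [w5m, h5, ← hτdef, show -(4 * τ * 0) = 0 by ring, Real.exp_zero]
    field_simp
    rw [show τ + (w + m) + (τ - (w + m)) = 2 * τ by ring, div_eq_iff (by positivity)]
    ring
  · rw [w5p, h5, ← hτdef, show -(4 * τ * 0) = 0 by ring, Real.exp_zero]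
    field_simp
    rw [show τ + (w + m) + (τ - (w + m)) = 2 * τ by ring, div_eq_iff (by positivity)]
    ring
  · rw [b5, ← hτdef, show -(4 * τ * 0) = 0 by ring, show -(2 * τ * 0) = 0 by ring, Real.exp_zero]
    rw [mul_one, mul_one, show w + m + τ + (τ - (w + m)) = 2 * τ by ring]
    field_simp
  · intro t ht
    refine ⟨hb2 t, h5_deriv' _ t hτsq (hgpos t ht), h5_deriv' _ t hτsq (hgpos t ht),
      b5_deriv' t (hgpos t ht)⟩
  · -- limit of w5m
    have hden : Tendsto (fun t : ℝ => 2 * (τ + (w + m) +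
        (τ - (w + m)) * Real.exp (-(4 * τ * t)))) atTop (nhds (2 * (τ + (w + m)))) := by
      have := ((hE0.const_mul (τ - (w + m))).const_add (τ + (w + m))).const_mul 2
      simpa using this
    have hnum : Tendsto (fun t : ℝ => (τ + -(w - m)) * (τ + (w + m)) +
        (τ - -(w - m)) * ((w + m) - τ) * Real.exp (-(4 * τ * t))) atTop
        (nhds ((τ + -(w - m)) * (τ + (w + m)))) := by
      have := (hE0.const_mul ((τ - -(w - m)) * ((w + m) - τ))).const_add
        ((τ + -(w - m)) * (τ + (w + m)))
      simpa using this
    have hne : 2 * (τ + (w + m)) ≠ 0 := by nlinarith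
    have H := hnum.div hden hne
    have hval : (τ + -(w - m)) * (τ + (w + m)) / (2 * (τ + (w + m))) = (τ - (w - m)) / 2 := by
      rw [div_eq_div_iff (by nlinarith) (by norm_num)]
      ring
    rw [← hval]
    exact H
  · have hden : Tendsto (fun t : ℝ => 2 * (τ + (w + m) +
        (τ - (w + m)) * Real.exp (-(4 * τ * t)))) atTop (nhds (2 * (τ + (w + m)))) := by
      have := ((hE0.const_mul (τ - (w + m))).const_add (τ + (w + m))).const_mul 2
      simpa using this
    have hnum : Tendsto (fun t : ℝ => (τ + (w - m)) * (τ + (w + m)) +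
        (τ - (w - m)) * ((w + m) - τ) * Real.exp (-(4 * τ * t))) atTop
        (nhds ((τ + (w - m)) * (τ + (w + m)))) := by
      have := (hE0.const_mul ((τ - (w - m)) * ((w + m) - τ))).const_add
        ((τ + (w - m)) * (τ + (w + m)))
      simpa using this
    have hne : 2 * (τ + (w + m)) ≠ 0 := by nlinarith
    have H := hnum.div hden hne
    have hval : (τ + (w - m)) * (τ + (w + m)) / (2 * (τ + (w + m))) = (τ + (w - m)) / 2 := by
      rw [div_eq_div_iff (by nlinarith) (by norm_num)]
      ring
    rw [← hval]
    exact H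
  · -- limit of b5
    have hden : Tendsto (fun t : ℝ => (w + m) + τ +
        (τ - (w + m)) * Real.exp (-(4 * τ * t))) atTop (nhds ((w + m) + τ)) := by
      have := (hE0.const_mul (τ - (w + m))).const_add ((w + m) + τ)
      simpa using this
    have hnum : Tendsto (fun t : ℝ => 2 * τ * b0 * Real.exp (-(2 * τ * t))) atTop (nhds 0) := by
      have := hE20.const_mul (2 * τ * b0)
      simpa using this
    have hne : (w + m) + τ ≠ 0 := by nlinarith
    have H := hnum.div hden hne
    rw [zero_div] at H
    exact H
  · -- exponential bounds
    refine ⟨((w + m) - τ) / 2 + |b0|, fun t ht => ?_⟩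
    have ht' : (0:ℝ) ≤ t := ht
    have hg := hgpos t ht'
    have hgge' := hgge t ht'
    set E := Real.exp (-(4 * τ * t)) with hEdef
    set e := Real.exp (-(2 * τ * t)) with hedef
    have hE0' : 0 < E := Real.exp_pos _
    have he0' : 0 < e := Real.exp_pos _
    have hCnn : 0 ≤ ((w + m) - τ) / 2 + |b0| := by
      have := abs_nonneg b0; linarith
    refine ⟨?_, ?_, ?_⟩
    · have hid : w5m w m b0 t - (τ - (w - m)) / 2 =
          τ * ((w + m) - τ) * E / (τ + (w + m) + (τ - (w + m)) * E) := by
        rw [w5m, h5, ← hτdef, ← hEdef]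
        rw [div_sub_div _ _ (by positivity) (by norm_num : (2:ℝ) ≠ 0),
          div_eq_div_iff (by positivity) (by positivity)]
        ring
      have hnn : 0 ≤ τ * ((w + m) - τ) * E / (τ + (w + m) + (τ - (w + m)) * E) := by
        apply div_nonneg _ hg.le
        have : (0:ℝ) ≤ (w + m) - τ := by linarith
        positivity
      rw [hid, abs_of_nonneg hnn, div_le_iff₀ hg]
      have habs : 0 ≤ |b0| := abs_nonneg b0
      nlinarith [mul_le_mul_of_nonneg_left hgge'
        (mul_nonneg hE0'.le hCnn),
        mul_nonneg (mul_nonneg hτpos.le hE0'.le) habs]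
    · have hid : w5p w m b0 t - (τ + (w - m)) / 2 =
          τ * ((w + m) - τ) * E / (τ + (w + m) + (τ - (w + m)) * E) := by
        rw [w5p, h5, ← hτdef, ← hEdef]
        rw [div_sub_div _ _ (by positivity) (by norm_num : (2:ℝ) ≠ 0),
          div_eq_div_iff (by positivity) (by positivity)]
        ring
      have hnn : 0 ≤ τ * ((w + m) - τ) * E / (τ + (w + m) + (τ - (w + m)) * E) := by
        apply div_nonneg _ hg.le
        have : (0:ℝ) ≤ (w + m) - τ := by linarith
        positivity
      rw [hid, abs_of_nonneg hnn, div_le_iff₀ hg]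
      have habs : 0 ≤ |b0| := abs_nonneg b0
      nlinarith [mul_le_mul_of_nonneg_left hgge'
        (mul_nonneg hE0'.le hCnn),
        mul_nonneg (mul_nonneg hτpos.le hE0'.le) habs]
    · have hid : b5 w m b0 t = 2 * τ * b0 * e / (w + m + τ + (τ - (w + m)) * E) := by
        rw [b5, ← hτdef, ← hEdef, ← hedef]
      have hg2 : 0 < w + m + τ + (τ - (w + m)) * E := by linarith
      rw [hid, abs_div, abs_of_pos hg2, div_le_iff₀ hg2]
      have h1 : |2 * τ * b0 * e| = 2 * τ * |b0| * e := by
        rw [abs_mul, abs_mul, abs_mul]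
        rw [abs_of_pos he0', abs_of_nonneg (by norm_num : (0:ℝ) ≤ 2), abs_of_pos hτpos]
      rw [h1]
      have habs : 0 ≤ |b0| := abs_nonneg b0
      nlinarith [mul_le_mul_of_nonneg_left hgge' (mul_nonneg he0'.le habs),
        mul_nonneg (mul_nonneg (by linarith : (0:ℝ) ≤ ((w + m) - τ) / 2) he0'.le) hg2.le]
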